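/- Let R be a weakly Laskerian commutative ring whose Krull dimension is finite. Then the prime spectrum Spec R (with the Zariski topology) is a Noetherian topological space. -/

import Mathlib

/-- An `R`-module `M` is *weakly Laskerian* if every quotient of `M` has only finitely many
associated prime ideals. -/
def IsWeaklyLaskerian (R : Type*) [CommRing R] (M : Type*) [AddCommGroup M]
    [Module R M] : Prop :=
  ∀ N : Submodule R M, (associatedPrimes R (M ⧸ N)).Finite

section Aux

variable {R : Type*} [CommRing R]

/-- If `p` is a minimal prime over `I` and `x ∈ p`, then some multiple of a power of `x`
by an element outside `p` lies in `I`. -/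
lemma WLaux.exists_pow_mul_mem {I p : Ideal R} (hp : p ∈ I.minimalPrimes) {x : R}
    (hx : x ∈ p) : ∃ y ∉ p, ∃ n : ℕ, y * x ^ n ∈ I := by
  by_contra hcon
  push_neg at hcon
  have hprime : p.IsPrime := hp.1.1
  let S : Submonoid R :=
    { carrier := {r | ∃ y, y ∉ p ∧ ∃ n : ℕ, r = y * x ^ n}
      mul_mem' := by
        rintro a b ⟨y1, hy1, n1, rfl⟩ ⟨y2, hy2, n2, rfl⟩
        exact ⟨y1 * y2, fun h => (hprime.mem_or_mem h).elim hy1 hy2, n1 + n2, by ring⟩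
      one_mem' := ⟨1, p.ne_top_iff_one.mp hprime.ne_top, 0, by ring⟩ }
  have hdisj : Disjoint (I : Set R) (S : Set R) := by
    rw [Set.disjoint_left]
    rintro r hrI ⟨y, hy, n, rfl⟩
    exact hcon y hy n hrI
  obtain ⟨q, hq, hIq, hdq⟩ := Ideal.exists_le_prime_disjoint I S hdisj
  have hqp : q ≤ p := by
    intro z hz
    by_contra hzp
    exact Set.disjoint_left.mp hdq hz ⟨z, hzp, 0, by ring⟩
  have hpq : p ≤ q := hp.2 ⟨hq, hIq⟩ hqp
  have hxS : x ∈ (S : Set R) := ⟨1, p.ne_top_iff_one.mp hprime.ne_top, 1, by ring⟩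
  exact Set.disjoint_right.mp hdq hxS (hpq hx)

/-- Two distinct minimal primes over `I` can be "separated": there are `a ∉ p`, `b ∉ q` with
`a * b ∈ I`. -/
lemma WLaux.exists_sep {I p q : Ideal R} (hp : p ∈ I.minimalPrimes) (hq : q ∈ I.minimalPrimes)
    (hne : p ≠ q) : ∃ a b : R, a ∉ p ∧ b ∉ q ∧ a * b ∈ I := by
  have hqp : ¬ q ≤ p := by
    intro hle
    exact hne (le_antisymm (hp.2 ⟨hq.1.1, hq.1.2⟩ hle) hle)
  obtain ⟨x, hxq, hxp⟩ := SetLike.not_le_iff_exists.mp hqp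
  obtain ⟨y, hy, n, hyx⟩ := WLaux.exists_pow_mul_mem hq hxq
  exact ⟨x ^ n, y, fun h => hxp (hp.1.1.mem_of_pow_mem n h), hy, by
    rw [mul_comm]; exact hyx⟩


/-- The state for the recursive construction: an infinite set `S` of minimal primes over `I`
still available, and an ideal `P` (the intersection of the previously chosen primes) not
contained in any member of `S`. -/
structure WLaux.MPState (I : Ideal R) where
  S : Set (Ideal R)
  P : Ideal R
  sub : S ⊆ I.minimalPrimes
  inf : S.Infinite
  nle : ∀ q ∈ S, ¬ P ≤ q

namespace WLaux

variable {I : Ideal R}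

lemma MPState.step (st : MPState I) :
    ∃ x : R × Ideal R × MPState I,
      x.2.1 ∈ st.S ∧ x.1 ∉ x.2.1 ∧ x.1 ∈ st.P ∧
      (∀ r ∈ x.2.2.S, x.1 ∈ r) ∧ x.2.2.S ⊆ st.S ∧ x.2.1 ∉ x.2.2.S ∧
      x.2.2.P ≤ st.P ∧ x.2.2.P ≤ x.2.1 := by
  obtain ⟨p, hpS, q, hqS, hpq⟩ := st.inf.nontrivial
  have hpM := st.sub hpS
  have hqM := st.sub hqS
  obtain ⟨a, b, hap, hbq, habI⟩ := WLaux.exists_sep hpM hqM hpq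
  have key : ∀ r ∈ st.S, a ∉ r → b ∈ r := by
    intro r hr har
    have hrM := st.sub hr
    exact ((hrM.1.1.mem_or_mem (hrM.1.2 habI)).resolve_left har)
  by_cases hA : {r ∈ st.S | a ∉ r}.Infinite
  · -- use q; new S is A
    obtain ⟨π, hπP, hπq⟩ := SetLike.not_le_iff_exists.mp (st.nle q hqS)
    have hqprime : q.IsPrime := hqM.1.1
    refine ⟨⟨π * b, q,
      { S := {r ∈ st.S | a ∉ r}
        P := st.P ⊓ q
        sub := fun r hr => st.sub hr.1
        inf := hA
        nle := ?_ }⟩, hqS, ?_, ?_, ?_, ?_, ?_, ?_, ?_⟩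
    · rintro r ⟨hrS, har⟩ hle
      have hrM := st.sub hrS
      rcases hrM.1.1.inf_le.mp hle with h | h
      · exact st.nle r hrS h
      · have : r ≤ q := hrM.2 ⟨hqM.1.1, hqM.1.2⟩ h
        exact hbq (le_antisymm this h ▸ key r hrS har)
    · exact fun h => (hqprime.mem_or_mem h).elim hπq hbq
    · exact Ideal.mul_mem_right _ _ hπP
    · rintro r ⟨hrS, har⟩
      exact Ideal.mul_mem_left _ _ (key r hrS har)
    · exact fun r hr => hr.1
    · rintro ⟨-, haq⟩
      exact hbq (key q hqS haq)
    · exact inf_le_left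
    · exact inf_le_right
  · -- use p; new S is {r ∈ S | a ∈ r}
    obtain ⟨π, hπP, hπp⟩ := SetLike.not_le_iff_exists.mp (st.nle p hpS)
    have hpprime : p.IsPrime := hpM.1.1
    have hinf' : {r ∈ st.S | a ∈ r}.Infinite := by
      refine ((st.inf.diff (Set.not_infinite.mp hA)).mono ?_)
      rintro r ⟨hrS, hr⟩
      exact ⟨hrS, by_contra fun har => hr ⟨hrS, har⟩⟩
    refine ⟨⟨π * a, p,
      { S := {r ∈ st.S | a ∈ r}
        P := st.P ⊓ p
        sub := fun r hr => st.sub hr.1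
        inf := hinf'
        nle := ?_ }⟩, hpS, ?_, ?_, ?_, ?_, ?_, ?_, ?_⟩
    · rintro r ⟨hrS, har⟩ hle
      have hrM := st.sub hrS
      rcases hrM.1.1.inf_le.mp hle with h | h
      · exact st.nle r hrS h
      · have : r ≤ p := hrM.2 ⟨hpM.1.1, hpM.1.2⟩ h
        exact hap (le_antisymm this h ▸ har)
    · exact fun h => (hpprime.mem_or_mem h).elim hπp hap
    · exact Ideal.mul_mem_right _ _ hπP
    · rintro r ⟨hrS, har⟩
      exact Ideal.mul_mem_left _ _ har
    · exact fun r hr => hr.1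
    · rintro ⟨-, hap'⟩
      exact hap hap'
    · exact inf_le_left
    · exact inf_le_right

end WLaux

/-- In a weakly Laskerian ring, every ideal has finitely many minimal primes. -/
lemma WLaux.minimalPrimes_finite (hR : IsWeaklyLaskerian R R) (I : Ideal R) :
    I.minimalPrimes.Finite := by
  by_contra hinf'
  have hinf : I.minimalPrimes.Infinite := hinf'
  classical
  -- initial state
  have hne : ∀ q ∈ I.minimalPrimes, ¬ (⊤ : Ideal R) ≤ q := by
    intro q hq hle
    exact hq.1.1.ne_top (top_le_iff.mp hle)
  let st0 : WLaux.MPState I := ⟨I.minimalPrimes, ⊤, le_refl _, hinf, hne⟩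
  choose F hF using @WLaux.MPState.step R _ I
  let seq : ℕ → WLaux.MPState I := fun n => Nat.rec st0 (fun _ st => (F st).2.2) n
  have hseq : ∀ n, seq (n + 1) = (F (seq n)).2.2 := fun n => rfl
  let a : ℕ → R := fun n => (F (seq n)).1
  let p : ℕ → Ideal R := fun n => (F (seq n)).2.1
  have h1 : ∀ n, p n ∈ (seq n).S := fun n => (hF (seq n)).1
  have h2 : ∀ n, a n ∉ p n := fun n => (hF (seq n)).2.1
  have h3 : ∀ n, a n ∈ (seq n).P := fun n => (hF (seq n)).2.2.1
  have h4 : ∀ n, ∀ r ∈ (seq (n + 1)).S, a n ∈ r := fun n => (hF (seq n)).2.2.2.1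
  have h5 : ∀ n, (seq (n + 1)).S ⊆ (seq n).S := fun n => (hF (seq n)).2.2.2.2.1
  have h6 : ∀ n, p n ∉ (seq (n + 1)).S := fun n => (hF (seq n)).2.2.2.2.2.1
  have h7 : ∀ n, (seq (n + 1)).P ≤ (seq n).P := fun n => (hF (seq n)).2.2.2.2.2.2.1
  have h8 : ∀ n, (seq (n + 1)).P ≤ p n := fun n => (hF (seq n)).2.2.2.2.2.2.2
  have Ssub : ∀ m n, m ≤ n → (seq n).S ⊆ (seq m).S := by
    intro m n hmn
    induction hmn with
    | refl => exact le_refl _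
    | step _ ih => exact ih.trans' (h5 _)
  have Ple : ∀ m n, m ≤ n → (seq n).P ≤ (seq m).P := by
    intro m n hmn
    induction hmn with
    | refl => exact le_refl _
    | step _ ih => exact ih.trans' (h7 _)
  have hPmem : ∀ n, p n ∈ I.minimalPrimes := fun n => (seq n).sub (h1 n)
  have hmem : ∀ i j, i ≠ j → a i ∈ p j := by
    intro i j hij
    rcases lt_or_gt_of_ne hij with h | h
    · exact h4 i _ (Ssub (i + 1) j h (h1 j))
    · exact (Ple (j + 1) i h).trans (h8 j) (h3 i)
  have hinj : Function.Injective p := by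
    have key : ∀ i j, i < j → p i ≠ p j := by
      intro i j hij heq
      exact h6 i (heq ▸ Ssub (i + 1) j hij (h1 j))
    intro i j heq
    by_contra hne'
    rcases lt_or_gt_of_ne hne' with h | h
    · exact key i j h heq
    · exact key j i h heq.symm
  -- the bad quotient
  set J : Ideal R := ⨅ n, p n with hJ
  have hassoc : ∀ i, p i ∈ associatedPrimes R (R ⧸ (J : Submodule R R)) := by
    intro i
    refine ⟨(hPmem i).1.1, Submodule.Quotient.mk (a i), ?_⟩
    suffices hs : p i = (⊥ : Submodule R (R ⧸ (J : Submodule R R))).colon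
        {Submodule.Quotient.mk (a i)} by
      rw [← hs, (hPmem i).1.1.radical]
    ext r
    rw [Submodule.mem_colon_singleton, Submodule.mem_bot, ← Submodule.Quotient.mk_smul,
      Submodule.Quotient.mk_eq_zero, smul_eq_mul]
    have : r * a i ∈ J ↔ ∀ n, r * a i ∈ p n := by
      simp [hJ, Submodule.mem_iInf]
    rw [this]
    constructor
    · intro hr n
      by_cases hn : n = i
      · subst hn; exact Ideal.mul_mem_right _ _ hr
      · exact Ideal.mul_mem_left _ _ (hmem i n (fun h => hn h.symm))
    · intro hr
      exact ((hPmem i).1.1.mem_or_mem (hr i)).resolve_right (h2 i)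
  exact Set.not_infinite.mpr (hR (J : Submodule R R))
    (Set.infinite_of_injective_forall_mem hinj hassoc)




/-- There is no strictly increasing chain of radical ideals whose primes have bounded coheight. -/
lemma WLaux.no_chain (hR : IsWeaklyLaskerian R R) (n : ℕ) (f : ℕ → Ideal R) (hf : StrictMono f)
    (hrad : ∀ i, (f i).IsRadical)
    (hht : ∀ q : PrimeSpectrum R, f 0 ≤ q.asIdeal → Order.coheight q < (n : ℕ∞)) : False := by
  induction n using Nat.strong_induction_on generalizing f with
  | _ n IH =>
  classical
  have hMfin := WLaux.minimalPrimes_finite hR (f 0)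
  have key : ∀ m, ∃ p, p ∈ (f 0).minimalPrimes ∧
      (f m ⊔ p).radical ≠ (f (m + 1) ⊔ p).radical := by
    intro m
    by_contra hcon
    push_neg at hcon
    have hle : f (m + 1) ≤ f m := by
      intro x hx
      rw [← (hrad m).radical, Ideal.radical_eq_sInf]
      refine Submodule.mem_sInf.mpr ?_
      rintro q ⟨hq1, hq2⟩
      haveI := hq2
      obtain ⟨p, hpM, hpq⟩ :=
        Ideal.exists_minimalPrimes_le ((hf.monotone (Nat.zero_le m)).trans hq1)
      have hx2 : x ∈ (f (m + 1) ⊔ p).radical :=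
        Ideal.le_radical (Ideal.mem_sup_left hx)
      rw [← hcon p hpM] at hx2
      have hle2 : (f m ⊔ p).radical ≤ q := by
        conv_rhs => rw [← hq2.radical]
        exact Ideal.radical_mono (sup_le hq1 hpq)
      exact hle2 hx2
    exact (hf (Nat.lt_succ_self m)).not_ge hle
  choose P hPM hPne using key
  haveI : Finite ((f 0).minimalPrimes : Set (Ideal R)) := hMfin.to_subtype
  obtain ⟨y, hy⟩ := Finite.exists_infinite_fiber
    (fun m => (⟨P m, hPM m⟩ : ((f 0).minimalPrimes : Set (Ideal R))))
  set p : Ideal R := y.1 with hpdef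
  have hpM : p ∈ (f 0).minimalPrimes := y.2
  have hpprime : p.IsPrime := hpM.1.1
  have hSinf : {m : ℕ | (⟨P m, hPM m⟩ : ((f 0).minimalPrimes : Set (Ideal R))) = y}.Infinite :=
    Set.infinite_coe_iff.mp hy
  set Sp : ℕ → Prop := fun m => (⟨P m, hPM m⟩ : ((f 0).minimalPrimes : Set (Ideal R))) = y
    with hSp
  have hPp : ∀ m, Sp m → P m = p := fun m hm => congrArg Subtype.val hm
  -- the auxiliary monotone sequence
  set g : ℕ → Ideal R := fun m => (f m ⊔ p).radical with hg
  have hgmono : Monotone g := fun i j hij =>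
    Ideal.radical_mono (sup_le_sup_right (hf.monotone hij) p)
  have hgstep : ∀ m, Sp m → g m < g (m + 1) := by
    intro m hm
    refine lt_of_le_of_ne (hgmono (Nat.le_succ m)) ?_
    have := hPne m
    rw [hPp m hm] at this
    exact this
  set e : ℕ → ℕ := fun i => Nat.nth Sp i with he
  have hemono : StrictMono e := Nat.nth_strictMono hSinf
  have heS : ∀ i, Sp (e i) := fun i => Nat.nth_mem_of_infinite hSinf i
  set F : ℕ → Ideal R := fun i => g (e i + 1) with hF
  have hFmono : StrictMono F := by
    intro i j hij
    calc g (e i + 1) ≤ g (e j) := hgmono (Nat.succ_le_of_lt (hemono hij))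
      _ < g (e j + 1) := hgstep _ (heS j)
  have hFrad : ∀ i, (F i).IsRadical := fun i => Ideal.radical_isRadical _
  have hpF0 : p < F 0 := by
    refine lt_of_le_of_lt (le_trans le_sup_right Ideal.le_radical : p ≤ g (e 0)) ?_
    exact hgstep _ (heS 0)
  -- coheight of p
  set pp : PrimeSpectrum R := ⟨p, hpprime⟩ with hpp
  have hcp : Order.coheight pp < (n : ℕ∞) := hht pp hpM.1.2
  have hcpne : Order.coheight pp ≠ ⊤ := by
    intro h
    rw [h] at hcp
    exact absurd hcp (by simp)
  set m' : ℕ := (Order.coheight pp).toNat with hm'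
  have hm'eq : (m' : ℕ∞) = Order.coheight pp := ENat.coe_toNat hcpne
  have hm'lt : m' < n := by
    rw [← Nat.cast_lt (α := ℕ∞), hm'eq]
    exact hcp
  refine IH m' hm'lt F hFmono hFrad ?_
  intro q hq
  have hlt : pp < q := by
    rw [← PrimeSpectrum.asIdeal_lt_asIdeal]
    exact lt_of_lt_of_le hpF0 hq
  have hfin : Order.coheight pp < ⊤ := lt_of_lt_of_le hcp le_top
  have hfinq : Order.coheight q < ⊤ := lt_of_le_of_lt (Order.coheight_anti hlt.le) hfin
  have h2 := Order.coheight_strictAnti hlt hfinq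
  rw [hm'eq]
  exact h2



end Aux

/-- If `R` is a weakly Laskerian commutative ring of finite Krull dimension, then
`Spec R` is a Noetherian topological space. -/

theorem noetherianSpace_of_weaklyLaskerian_of_finiteKrullDim {R : Type*} [CommRing R]
    (hR : IsWeaklyLaskerian R R) (hdim : ringKrullDim R < ⊤) :
    TopologicalSpace.NoetherianSpace (PrimeSpectrum R) := by
  -- uniform bound on coheights
  obtain ⟨N, hN⟩ : ∃ N : ℕ, ∀ q : PrimeSpectrum R, Order.coheight q < ((N + 1 : ℕ) : ℕ∞) := by
    rcases hkd : ringKrullDim R with _ | c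
    · refine ⟨0, fun q => absurd ?_ (WithBot.coe_ne_bot (a := Order.coheight q))⟩
      have := Order.coheight_le_krullDim q
      rw [show Order.krullDim (PrimeSpectrum R) = ringKrullDim R from rfl, hkd] at this
      exact le_bot_iff.mp this
    · have hc : c ≠ ⊤ := by
        rw [hkd] at hdim
        intro h
        rw [h] at hdim
        exact lt_irrefl _ hdim
      refine ⟨(ENat.toNat c), fun q => ?_⟩
      have h1 := Order.coheight_le_krullDim q
      rw [show Order.krullDim (PrimeSpectrum R) = ringKrullDim R from rfl, hkd] at h1
      have h2 : Order.coheight q ≤ c := WithBot.coe_le_coe.mp h1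
      have h3 : c = ((ENat.toNat c) : ℕ∞) := (ENat.coe_toNat hc).symm
      refine lt_of_le_of_lt (h2.trans (le_of_eq h3)) ?_
      exact_mod_cast Nat.lt_succ_self (ENat.toNat c)
  constructor
  rw [RelEmbedding.wellFounded_iff_isEmpty]
  constructor
  intro emb
  set U : ℕ → TopologicalSpace.Opens (PrimeSpectrum R) := fun n => emb n with hU
  have hUmono : ∀ n, U n < U (n + 1) := by
    intro n
    exact emb.map_rel_iff.mpr (Nat.lt_succ_self n)
  set f : ℕ → Ideal R :=
    fun n => PrimeSpectrum.vanishingIdeal ((U n : Set (PrimeSpectrum R))ᶜ) with hf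
  have hfmono : StrictMono f := by
    refine strictMono_nat_of_lt_succ ?_
    intro n
    have hss : ((U (n + 1) : Set (PrimeSpectrum R))ᶜ) ⊂ ((U n : Set (PrimeSpectrum R))ᶜ) := by
      rw [Set.ssubset_iff_subset_ne]
      constructor
      · exact Set.compl_subset_compl.mpr ((hUmono n).le)
      · intro h
        exact (hUmono n).ne (by
          apply TopologicalSpace.Opens.ext
          have := congrArg compl h
          simpa using this.symm)
    exact (PrimeSpectrum.vanishingIdeal_strict_anti_mono_iff
      (U (n + 1)).isOpen.isClosed_compl (U n).isOpen.isClosed_compl).mp hss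
  refine WLaux.no_chain hR (N + 1) f hfmono
    (fun i => PrimeSpectrum.isRadical_vanishingIdeal _) (fun q _ => hN q)
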